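/- Let p ≥ 2, let f : ℝ^d → ℝ be convex and differentiable, attaining its minimum f* at x*, with bounded sublevel sets; set R = sup{ ‖x − x*‖ : f(x) ≤ f(X_0) }. Let X : [0, ∞) → ℝ^d be a differentiable curve satisfying the rescaled gradient flow Ẋ_t = −∇f(X_t)/‖∇f(X_t)‖^{(p−2)/(p−1)} whenever ∇f(X_t) ≠ 0 (and Ẋ_t = 0 when ∇f(X_t) = 0). Then for all t > 0, f(X_t) − f* ≤ (p−1)^{p−1} R^p / t^{p−1}. -/

import Mathlib

open scoped RealInnerProductSpace
open Real Set

noncomputable section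

lemma grad_convex_ineq {d : ℕ} {f : EuclideanSpace ℝ (Fin d) → ℝ}
    (hconv : ConvexOn ℝ Set.univ f) (hdiff : Differentiable ℝ f)
    (x y : EuclideanSpace ℝ (Fin d)) :
    f x + ⟪gradient f x, y - x⟫ ≤ f y := by
  set φ : ℝ → ℝ := fun t => f (x + t • (y - x)) with hφdef
  have hline : ∀ t : ℝ, HasDerivAt (fun t : ℝ => x + t • (y - x)) (y - x) t := by
    intro t
    simpa using ((hasDerivAt_id t).smul_const (y - x)).const_add x
  have hφconv : ConvexOn ℝ Set.univ φ := by
    have := hconv.comp_affineMap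
      (AffineMap.lineMap x y : ℝ →ᵃ[ℝ] EuclideanSpace ℝ (Fin d))
    have heq : ∀ t : ℝ, (AffineMap.lineMap x y : ℝ →ᵃ[ℝ] _) t = x + t • (y - x) := by
      intro t; simp [AffineMap.lineMap_apply]; module
    have h2 : ConvexOn ℝ Set.univ (f ∘ (AffineMap.lineMap x y : ℝ →ᵃ[ℝ] _)) :=
      this.subset (by simp) convex_univ
    exact h2.congr (fun t _ => by simp [hφdef, heq, Function.comp])
  have hφd : HasDerivAt φ ⟪gradient f x, y - x⟫ 0 := by
    have h1 : HasDerivAt φ (fderiv ℝ f (x + (0:ℝ) • (y - x)) (y - x)) 0 :=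
      (hdiff _).hasFDerivAt.comp_hasDerivAt 0 (hline 0)
    have : fderiv ℝ f x (y - x) = ⟪gradient f x, y - x⟫ := by
      rw [gradient, InnerProductSpace.toDual_symm_apply]
    rw [zero_smul, add_zero, this] at h1
    exact h1
  have := hφconv.le_slope_of_hasDerivAt (mem_univ (0:ℝ)) (mem_univ (1:ℝ)) one_pos hφd
  rw [slope_def_field] at this
  have h0 : φ 0 = f x := by simp [hφdef]
  have h1 : φ 1 = f y := by simp [hφdef]
  rw [h0, h1] at this
  linarith

theorem rescaled_gradient_flow_rate
    (d : ℕ) (p : ℝ) (hp : 2 ≤ p)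
    (f : EuclideanSpace ℝ (Fin d) → ℝ)
    (hconv : ConvexOn ℝ Set.univ f) (hdiff : Differentiable ℝ f)
    (xstar : EuclideanSpace ℝ (Fin d)) (hmin : ∀ x, f xstar ≤ f x)
    (X X' : ℝ → EuclideanSpace ℝ (Fin d))
    (hX : ∀ t ≥ (0 : ℝ), HasDerivAt X (X' t) t)
    (hflow : ∀ t ≥ (0 : ℝ), gradient f (X t) ≠ 0 →
      X' t = -(1 / ‖gradient f (X t)‖ ^ ((p - 2) / (p - 1))) • gradient f (X t))
    (hflow0 : ∀ t ≥ (0 : ℝ), gradient f (X t) = 0 → X' t = 0)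
    (hbdd : Bornology.IsBounded {y : EuclideanSpace ℝ (Fin d) | f y ≤ f (X 0)})
    (R : ℝ)
    (hR : R = sSup {r : ℝ | ∃ y, f y ≤ f (X 0) ∧ r = ‖y - xstar‖}) :
    ∀ t : ℝ, 0 < t →
      f (X t) - f xstar ≤ (p - 1) ^ (p - 1) * R ^ p / t ^ (p - 1) := by
  have hp1pos : (0:ℝ) < p - 1 := by linarith
  have hpne : p - 1 ≠ 0 := ne_of_gt hp1pos
  set g : ℝ → EuclideanSpace ℝ (Fin d) := fun s => gradient f (X s) with hg
  set E : ℝ → ℝ := fun s => f (X s) - f xstar with hE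
  have hE0 : ∀ s, 0 ≤ E s := fun s => sub_nonneg.2 (hmin _)
  have hEd : ∀ s ≥ (0:ℝ), HasDerivAt E (⟪g s, X' s⟫) s := by
    intro s hs
    have h1 : HasDerivAt (fun u => f (X u)) (fderiv ℝ f (X s) (X' s)) s :=
      (hdiff (X s)).hasFDerivAt.comp_hasDerivAt s (hX s hs)
    have h2 : ⟪g s, X' s⟫ = fderiv ℝ f (X s) (X' s) :=
      InnerProductSpace.toDual_symm_apply
    have := h1.sub_const (f xstar)
    rw [← h2] at this
    exact this
  set q : ℝ := p / (p - 1) with hqdef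
  have hqpos : 0 < q := div_pos (by linarith) hp1pos
  have hval : ∀ s ≥ (0:ℝ), g s ≠ 0 → ⟪g s, X' s⟫ = -(‖g s‖ ^ q) := by
    intro s hs hgs
    have hn : 0 < ‖g s‖ := norm_pos_iff.2 hgs
    have hkey : (1 / ‖g s‖ ^ ((p-2)/(p-1))) * ‖g s‖ ^ (2:ℝ) = ‖g s‖ ^ q := by
      rw [one_div, ← Real.rpow_neg hn.le, ← Real.rpow_add hn]
      congr 1
      rw [hqdef]; field_simp; ring
    have h2 : ‖g s‖ ^ (2:ℕ) = ‖g s‖ ^ (2:ℝ) := by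
      rw [← Real.rpow_natCast] ; norm_num
    rw [hflow s hs hgs, real_inner_smul_right, real_inner_self_eq_norm_sq,
      neg_mul, h2, hkey]
  have hval0 : ∀ s ≥ (0:ℝ), g s = 0 → ⟪g s, X' s⟫ = 0 := by
    intro s hs h; rw [h, inner_zero_left]
  have hanti : AntitoneOn E (Ici 0) := by
    apply antitoneOn_of_deriv_nonpos (convex_Ici 0)
    · exact fun s hs => (hEd s hs).continuousAt.continuousWithinAt
    · rw [interior_Ici]
      exact fun s hs => ((hEd s (le_of_lt hs)).differentiableAt).differentiableWithinAt
    · rw [interior_Ici]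
      intro s hs
      rw [(hEd s hs.le).deriv]
      rcases eq_or_ne (g s) 0 with h | h
      · rw [hval0 s hs.le h]
      · rw [hval s hs.le h]
        exact neg_nonpos.2 (Real.rpow_nonneg (norm_nonneg _) _)
  have hfle : ∀ s ≥ (0:ℝ), f (X s) ≤ f (X 0) := by
    intro s hs
    have := hanti self_mem_Ici hs hs
    simp only [hE] at this; linarith
  have hbddA : BddAbove {r : ℝ | ∃ y, f y ≤ f (X 0) ∧ r = ‖y - xstar‖} := by
    obtain ⟨C, hC⟩ := hbdd.subset_closedBall xstar
    refine ⟨C, ?_⟩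
    rintro r ⟨y, hy, rfl⟩
    have := hC hy
    rwa [Metric.mem_closedBall, dist_eq_norm] at this
  have hXsR : ∀ s ≥ (0:ℝ), ‖X s - xstar‖ ≤ R := by
    intro s hs; rw [hR]
    exact le_csSup hbddA ⟨X s, hfle s hs, rfl⟩
  have hRnn : 0 ≤ R := le_trans (norm_nonneg _) (hXsR 0 le_rfl)
  have hER : ∀ s ≥ (0:ℝ), E s ≤ ‖g s‖ * R := by
    intro s hs
    have h1 := grad_convex_ineq hconv hdiff (X s) xstar
    have h2 : ⟪g s, X s - xstar⟫ ≤ ‖g s‖ * ‖X s - xstar‖ := real_inner_le_norm _ _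
    have h3 : ‖g s‖ * ‖X s - xstar‖ ≤ ‖g s‖ * R :=
      mul_le_mul_of_nonneg_left (hXsR s hs) (norm_nonneg _)
    have h4 : ⟪g s, xstar - X s⟫ = -⟪g s, X s - xstar⟫ := by
      rw [← inner_neg_right, neg_sub]
    simp only [hE]
    have : ⟪gradient f (X s), xstar - X s⟫ = ⟪g s, xstar - X s⟫ := rfl
    rw [this] at h1
    linarith
  have hEzg : ∀ s ≥ (0:ℝ), g s = 0 → E s = 0 := by
    intro s hs h
    have := hER s hs
    rw [h] at this; simp at this
    linarith [hE0 s]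
  intro t ht
  have hRHS0 : 0 ≤ (p - 1) ^ (p - 1) * R ^ p / t ^ (p - 1) := by
    apply div_nonneg
    · exact mul_nonneg (Real.rpow_nonneg (by linarith) _) (Real.rpow_nonneg hRnn _)
    · exact Real.rpow_nonneg ht.le _
  have hEtgoal : f (X t) - f xstar = E t := rfl
  rw [hEtgoal]
  by_cases hzero : ∃ s ∈ Icc (0:ℝ) t, E s = 0
  · obtain ⟨s, hs, hEs⟩ := hzero
    have hEt : E t ≤ E s := hanti (mem_Ici.2 hs.1) (mem_Ici.2 ht.le) hs.2
    rw [hEs] at hEt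
    linarith
  · push_neg at hzero
    have hEpos : ∀ s ∈ Icc (0:ℝ) t, 0 < E s :=
      fun s hs => lt_of_le_of_ne (hE0 s) (Ne.symm (hzero s hs))
    have hgne : ∀ s ∈ Icc (0:ℝ) t, g s ≠ 0 :=
      fun s hs h => hzero s hs (hEzg s hs.1 h)
    have hX0ne : X 0 ≠ xstar := by
      intro h
      exact hzero 0 ⟨le_rfl, ht.le⟩ (by simp [hE, h])
    have hRpos : 0 < R :=
      lt_of_lt_of_le (norm_pos_iff.2 (sub_ne_zero.2 hX0ne)) (hXsR 0 le_rfl)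
    have hRq : 0 < R ^ q := Real.rpow_pos_of_pos hRpos q
    set c : ℝ := 1 / ((p - 1) * R ^ q) with hc
    have hcpos : 0 < c := by
      rw [hc]; positivity
    set e : ℝ := -(1/(p-1)) with he
    set φ : ℝ → ℝ := fun s => E s ^ e - c * s with hφ
    have hφd : ∀ s ∈ Icc (0:ℝ) t,
        HasDerivAt φ (⟪g s, X' s⟫ * e * E s ^ (e - 1) - c) s := by
      intro s hs
      have h1 : HasDerivAt (fun u => E u ^ e) (⟪g s, X' s⟫ * e * E s ^ (e - 1)) s :=
        (hEd s hs.1).rpow_const (Or.inl (ne_of_gt (hEpos s hs)))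
      have h2 : HasDerivAt (fun u : ℝ => c * u) c s := by
        simpa using (hasDerivAt_id s).const_mul c
      exact h1.sub h2
    have hmono : MonotoneOn φ (Icc 0 t) := by
      apply monotoneOn_of_deriv_nonneg (convex_Icc 0 t)
      · exact fun s hs => (hφd s hs).continuousAt.continuousWithinAt
      · rw [interior_Icc]
        exact fun s hs =>
          ((hφd s (Ioo_subset_Icc_self hs)).differentiableAt).differentiableWithinAt
      · rw [interior_Icc]
        intro s hs
        have hs' : s ∈ Icc (0:ℝ) t := Ioo_subset_Icc_self hs
        rw [(hφd s hs').deriv, hval s hs'.1 (hgne s hs')]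
        have hEs := hEpos s hs'
        have hgbd : E s / R ≤ ‖g s‖ := (div_le_iff₀ hRpos).2 (hER s hs'.1)
        have hgq : (E s / R) ^ q ≤ ‖g s‖ ^ q :=
          Real.rpow_le_rpow (div_nonneg (hE0 s) hRnn) hgbd hqpos.le
        have hdiv : (E s / R) ^ q = E s ^ q / R ^ q := Real.div_rpow (hE0 s) hRnn q
        have hcomb : E s ^ (e - 1) * E s ^ q = 1 := by
          rw [← Real.rpow_add hEs]
          have : e - 1 + q = 0 := by rw [he, hqdef]; field_simp; ring
          rw [this, Real.rpow_zero]
        have hEe1 : 0 < E s ^ (e - 1) := Real.rpow_pos_of_pos hEs _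
        have hne : -(1:ℝ) * e = 1 / (p - 1) := by rw [he]; ring
        have key : c ≤ -(1) * e * E s ^ (e - 1) * ‖g s‖ ^ q := by
          have h5 : -(1) * e * E s ^ (e - 1) * (E s ^ q / R ^ q) = c := by
            calc -(1) * e * E s ^ (e - 1) * (E s ^ q / R ^ q)
                = (1 / (p - 1)) * ((E s ^ (e - 1) * E s ^ q) / R ^ q) := by
                  rw [hne]; ring
              _ = (1 / (p - 1)) * (1 / R ^ q) := by rw [hcomb]
              _ = c := by rw [hc, one_div_mul_one_div]
          calc c = -(1) * e * E s ^ (e - 1) * (E s ^ q / R ^ q) := h5.symm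
            _ ≤ -(1) * e * E s ^ (e - 1) * ‖g s‖ ^ q := by
                rw [← hdiv]
                apply mul_le_mul_of_nonneg_left hgq
                rw [hne]
                exact mul_nonneg (le_of_lt (div_pos one_pos hp1pos)) hEe1.le
        nlinarith [key]
    have hφle : φ 0 ≤ φ t := hmono ⟨le_rfl, ht.le⟩ ⟨ht.le, le_rfl⟩ ht.le
    have hE0e : 0 < E 0 ^ e := Real.rpow_pos_of_pos (hEpos 0 ⟨le_rfl, ht.le⟩) e
    have hkey : c * t ≤ E t ^ e := by
      simp only [hφ] at hφle
      nlinarith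
    have hctpos : 0 < c * t := mul_pos hcpos ht
    have h6 : (E t ^ e) ^ (-(p-1)) ≤ (c * t) ^ (-(p-1)) :=
      Real.rpow_le_rpow_of_nonpos hctpos hkey (by linarith)
    have h7 : (E t ^ e) ^ (-(p-1)) = E t := by
      rw [← Real.rpow_mul (hE0 t)]
      have : e * -(p-1) = 1 := by rw [he]; field_simp
      rw [this, Real.rpow_one]
    have h8 : (c * t) ^ (-(p-1)) = (p - 1) ^ (p - 1) * R ^ p / t ^ (p - 1) := by
      rw [Real.rpow_neg hctpos.le, ← Real.inv_rpow hctpos.le]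
      have hinv : (c * t)⁻¹ = (p - 1) * R ^ q / t := by
        rw [hc]; field_simp
      rw [hinv, Real.div_rpow (mul_nonneg (by linarith) hRq.le) ht.le,
        Real.mul_rpow (by linarith) hRq.le, ← Real.rpow_mul hRnn]
      have hqp : q * (p - 1) = p := by rw [hqdef]; field_simp
      rw [hqp]
    calc E t = (E t ^ e) ^ (-(p-1)) := h7.symm
      _ ≤ (c * t) ^ (-(p-1)) := h6
      _ = (p - 1) ^ (p - 1) * R ^ p / t ^ (p - 1) := h8
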